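/- Boundedness of the total human population: Let n ≥ 1 and let S, I, R, W : [0,∞) → ℝ^n be differentiable functions solving the cholera metapopulation system for all t ≥ 0, and suppose S_i(t) ≥ 0, I_i(t) ≥ 0, R_i(t) ≥ 0, W_i(t) ≥ 0 for all t ≥ 0 and all i. Let B = Σ_{i=1}^n b_i, let d_min = min_{i=1,…,n} d_i^H (which is positive), and let T_H(t) = Σ_{i=1}^n (S_i(t) + I_i(t) + R_i(t)). Then for all t ≥ 0, T_H(t) ≤ max( T_H(0), B / d_min ). -/

import Mathlib

/-- Boundedness of the total human population in the cholera
metapopulation model. -/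
theorem cholera_total_human_population_bounded
    (n : ℕ) (hn : 1 ≤ n)
    (b dH v ε γ δ ζ dC βI βW : Fin n → ℝ)
    (hb : ∀ i, 0 ≤ b i) (hdH : ∀ i, 0 < dH i) (hv : ∀ i, 0 ≤ v i)
    (hε : ∀ i, 0 ≤ ε i) (hγ : ∀ i, 0 ≤ γ i) (hδ : ∀ i, 0 ≤ δ i)
    (hζ : ∀ i, 0 ≤ ζ i) (hdC : ∀ i, 0 < dC i)
    (hβI : ∀ i, 0 ≤ βI i) (hβW : ∀ i, 0 ≤ βW i)
    (MS MI MR MW : Matrix (Fin n) (Fin n) ℝ)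
    (hMSoff : ∀ i j, i ≠ j → 0 ≤ MS i j) (hMScol : ∀ j, ∑ i, MS i j = 0)
    (hMIoff : ∀ i j, i ≠ j → 0 ≤ MI i j) (hMIcol : ∀ j, ∑ i, MI i j = 0)
    (hMRoff : ∀ i j, i ≠ j → 0 ≤ MR i j) (hMRcol : ∀ j, ∑ i, MR i j = 0)
    (hMWoff : ∀ i j, i ≠ j → 0 ≤ MW i j) (hMWcol : ∀ j, ∑ i, MW i j = 0)
    (S I R W : ℝ → Fin n → ℝ)
    (hS : ∀ t, 0 ≤ t → ∀ i, HasDerivWithinAt (fun τ => S τ i)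
      (b i + ε i * R t i - (βI i * I t i + βW i * W t i) * S t i
        - (v i + dH i) * S t i + ∑ j, MS i j * S t j) (Set.Ici (0:ℝ)) t)
    (hI : ∀ t, 0 ≤ t → ∀ i, HasDerivWithinAt (fun τ => I τ i)
      ((βI i * I t i + βW i * W t i) * S t i - (γ i + δ i + dH i) * I t i
        + ∑ j, MI i j * I t j) (Set.Ici (0:ℝ)) t)
    (hR : ∀ t, 0 ≤ t → ∀ i, HasDerivWithinAt (fun τ => R τ i)
      (γ i * I t i + v i * S t i - (ε i + dH i) * R t i
        + ∑ j, MR i j * R t j) (Set.Ici (0:ℝ)) t)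
    (hW : ∀ t, 0 ≤ t → ∀ i, HasDerivWithinAt (fun τ => W τ i)
      (ζ i * I t i - dC i * W t i + ∑ j, MW i j * W t j) (Set.Ici (0:ℝ)) t)
    (hnonneg : ∀ t, 0 ≤ t → ∀ i,
      0 ≤ S t i ∧ 0 ≤ I t i ∧ 0 ≤ R t i ∧ 0 ≤ W t i)
    (dmin : ℝ) (hdmin_le : ∀ i, dmin ≤ dH i) (hdmin_mem : ∃ i, dH i = dmin) :
    ∀ t, 0 ≤ t →
      ∑ i, (S t i + I t i + R t i) ≤
        max (∑ i, (S 0 i + I 0 i + R 0 i)) ((∑ i, b i) / dmin) := by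
  obtain ⟨i₀, hi₀⟩ := hdmin_mem
  have hd : 0 < dmin := hi₀ ▸ hdH i₀
  set B : ℝ := ∑ i, b i with hB
  set T : ℝ → ℝ := fun t => ∑ i, (S t i + I t i + R t i) with hTdef
  -- derivative of T
  set D : ℝ → ℝ := fun t => ∑ i,
    ((b i + ε i * R t i - (βI i * I t i + βW i * W t i) * S t i
        - (v i + dH i) * S t i + ∑ j, MS i j * S t j)
      + ((βI i * I t i + βW i * W t i) * S t i - (γ i + δ i + dH i) * I t i
        + ∑ j, MI i j * I t j)
      + (γ i * I t i + v i * S t i - (ε i + dH i) * R t i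
        + ∑ j, MR i j * R t j)) with hDdef
  have hT : ∀ t, 0 ≤ t → HasDerivWithinAt T (D t) (Set.Ici (0:ℝ)) t := by
    intro t ht
    exact HasDerivWithinAt.fun_sum fun i _ =>
      (((hS t ht i).add (hI t ht i)).add (hR t ht i))
  -- movement sums vanish
  have hmov : ∀ (M : Matrix (Fin n) (Fin n) ℝ), (∀ j, ∑ i, M i j = 0) →
      ∀ (X : Fin n → ℝ), ∑ i, ∑ j, M i j * X j = 0 := by
    intro M hcol X
    rw [Finset.sum_comm]
    refine Finset.sum_eq_zero fun j _ => ?_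
    rw [← Finset.sum_mul, hcol, zero_mul]
  have hDle : ∀ t, 0 ≤ t → D t ≤ B - dmin * T t := by
    intro t ht
    have hDeq : D t = (∑ i, (b i - dH i * S t i - (δ i + dH i) * I t i
        - dH i * R t i))
        + ((∑ i, ∑ j, MS i j * S t j) + (∑ i, ∑ j, MI i j * I t j)
          + (∑ i, ∑ j, MR i j * R t j)) := by
      rw [hDdef]
      rw [← Finset.sum_add_distrib, ← Finset.sum_add_distrib,
        ← Finset.sum_add_distrib]
      exact Finset.sum_congr rfl fun i _ => by ring
    rw [hDeq, hmov MS hMScol, hmov MI hMIcol, hmov MR hMRcol]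
    have : B - dmin * T t = ∑ i, (b i - dmin * (S t i + I t i + R t i)) := by
      rw [Finset.sum_sub_distrib, ← Finset.mul_sum]
    rw [this]
    have h0 : ((0:ℝ) + 0 + 0) = 0 := by ring
    rw [h0, add_zero]
    refine Finset.sum_le_sum fun i _ => ?_
    obtain ⟨hSi, hIi, hRi, _⟩ := hnonneg t ht i
    have h1 := hdmin_le i
    have h2 := hδ i
    nlinarith [mul_le_mul_of_nonneg_right h1 hSi,
      mul_le_mul_of_nonneg_right h1 hIi,
      mul_le_mul_of_nonneg_right h1 hRi]
  -- the auxiliary function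
  set g : ℝ → ℝ := fun t => (T t - B / dmin) * Real.exp (dmin * t) with hgdef
  have hg : ∀ t, 0 ≤ t → HasDerivWithinAt g
      (D t * Real.exp (dmin * t)
        + (T t - B / dmin) * (dmin * Real.exp (dmin * t)))
      (Set.Ici (0:ℝ)) t := by
    intro t ht
    have he : HasDerivAt (fun τ : ℝ => Real.exp (dmin * τ))
        (dmin * Real.exp (dmin * t)) t := by
      have := ((hasDerivAt_id t).const_mul dmin).exp
      simpa [mul_comm] using this
    exact ((hT t ht).sub_const (B / dmin)).mul he.hasDerivWithinAt
  have hganti : AntitoneOn g (Set.Ici (0:ℝ)) := by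
    apply antitoneOn_of_deriv_nonpos (convex_Ici 0)
    · intro t ht
      exact (hg t ht).continuousWithinAt
    · intro t ht
      rw [interior_Ici] at ht
      exact ((hg t (le_of_lt ht)).hasDerivAt (Ici_mem_nhds ht)).differentiableAt.differentiableWithinAt
    · intro t ht
      rw [interior_Ici] at ht
      have hda := (hg t (le_of_lt ht)).hasDerivAt (Ici_mem_nhds ht)
      rw [hda.deriv]
      have hDt := hDle t (le_of_lt ht)
      have hexp : 0 < Real.exp (dmin * t) := Real.exp_pos _
      have hBd : dmin * (B / dmin) = B := by field_simp
      nlinarith [mul_le_mul_of_nonneg_right hDt hexp.le]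
  intro t ht
  have hgle : g t ≤ g 0 := hganti Set.self_mem_Ici ht ht
  have hg0 : g 0 = T 0 - B / dmin := by simp [hgdef]
  have hexp1 : 1 ≤ Real.exp (dmin * t) :=
    Real.one_le_exp (by positivity)
  have hexp0 : 0 < Real.exp (dmin * t) := Real.exp_pos _
  rw [hg0] at hgle
  have hgle' : (T t - B / dmin) * Real.exp (dmin * t) ≤ T 0 - B / dmin := hgle
  show T t ≤ max (T 0) (B / dmin)
  by_cases hcase : T t ≤ B / dmin
  · exact le_max_of_le_right hcase
  · push_neg at hcase
    refine le_max_of_le_left ?_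
    nlinarith [mul_le_mul_of_nonneg_left hexp1 (le_of_lt (sub_pos.mpr hcase))]
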